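/- Let Γ be a (c,t)-sparse graph with 0 < c ≤ 1/2, let V, W ⊆ V(Γ) with |W| ≥ c^{−r}·t for a positive integer r. If R is a uniformly random r-tuple of vertices of V, then the probability that |W \ N⁺_Γ(R)| < c^r·|W| is at most r·t/|V|. -/

import Mathlib

open scoped Classical
open Finset SimpleGraph

/-- A graph is `(c,t)`-sparse if any two vertex subsets of size at least `t` have
edge density (counting ordered pairs) at most `1 - c`. -/
def Sparse {V : Type*} [Fintype V] (Γ : SimpleGraph V) (c : ℝ) (t : ℕ) : Prop :=
  ∀ A B : Finset V, t ≤ A.card → t ≤ B.card →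
    (((A ×ˢ B).filter fun p => Γ.Adj p.1 p.2).card : ℝ) ≤ (1 - c) * A.card * B.card

lemma badset_card_le {Vtx : Type*} [Fintype Vtx] {Γ : SimpleGraph Vtx} {c : ℝ} {t : ℕ}
    (hsparse : Sparse Γ c t) (S : Finset Vtx) (hS : t ≤ S.card) :
    (Finset.univ.filter fun v : Vtx =>
      (1 - c) * S.card < ((S.filter fun w => Γ.Adj v w).card : ℝ)).card ≤ t := by
  by_contra h
  push_neg at h
  set B := Finset.univ.filter fun v : Vtx =>
      (1 - c) * S.card < ((S.filter fun w => Γ.Adj v w).card : ℝ) with hB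
  have hBt : t ≤ B.card := h.le
  have hsp := hsparse B S hBt hS
  have hcount : (((B ×ˢ S).filter fun p => Γ.Adj p.1 p.2).card : ℝ)
      = ∑ v ∈ B, ((S.filter fun w => Γ.Adj v w).card : ℝ) := by
    rw [Finset.card_filter, Finset.sum_product]
    push_cast
    refine Finset.sum_congr rfl fun v _ => ?_
    rw [Finset.card_filter]
    push_cast
    rfl
  have hne : B.Nonempty := Finset.card_pos.mp (lt_of_le_of_lt (Nat.zero_le t) h)
  have hlt : ∑ v ∈ B, ((1 - c) * S.card) < ∑ v ∈ B, ((S.filter fun w => Γ.Adj v w).card : ℝ) := by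
    refine Finset.sum_lt_sum_of_nonempty hne ?_
    intro v hv
    exact (Finset.mem_filter.mp hv).2
  rw [Finset.sum_const, nsmul_eq_mul] at hlt
  rw [hcount] at hsp
  nlinarith [hsp, hlt]

noncomputable def Surv {Vtx : Type*} (Γ : SimpleGraph Vtx) (W : Finset Vtx) {V : Finset Vtx}
    {r : ℕ} (R : Fin r → {x // x ∈ V}) (k : ℕ) : Finset Vtx :=
  W.filter fun w => ∀ i : Fin r, (i : ℕ) < k → ¬ Γ.Adj (R i).1 w

lemma Surv_zero {Vtx : Type*} (Γ : SimpleGraph Vtx) (W : Finset Vtx) {V : Finset Vtx}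
    {r : ℕ} (R : Fin r → {x // x ∈ V}) : Surv Γ W R 0 = W := by
  simp [Surv]

lemma Surv_succ {Vtx : Type*} (Γ : SimpleGraph Vtx) (W : Finset Vtx) {V : Finset Vtx}
    {r : ℕ} (R : Fin r → {x // x ∈ V}) (k : ℕ) (hk : k < r) :
    Surv Γ W R (k + 1) = (Surv Γ W R k).filter fun w => ¬ Γ.Adj (R ⟨k, hk⟩).1 w := by
  rw [Surv, Surv, Finset.filter_filter]
  apply Finset.filter_congr
  intro w _
  constructor
  · intro h
    refine ⟨fun i hi => h i (Nat.lt_succ_of_lt hi), h ⟨k, hk⟩ (Nat.lt_succ_self k)⟩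
  · rintro ⟨h1, h2⟩ i hi
    rcases Nat.lt_succ_iff_lt_or_eq.mp hi with h | h
    · exact h1 i h
    · have : i = ⟨k, hk⟩ := Fin.ext h
      rw [this]; exact h2

lemma Surv_congr {Vtx : Type*} (Γ : SimpleGraph Vtx) (W : Finset Vtx) {V : Finset Vtx}
    {r : ℕ} {R R' : Fin r → {x // x ∈ V}} {k : ℕ}
    (h : ∀ i : Fin r, (i : ℕ) < k → R i = R' i) : Surv Γ W R k = Surv Γ W R' k := by
  apply Finset.filter_congr
  intro w _
  constructor
  · intro hh i hi; rw [← h i hi]; exact hh i hi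
  · intro hh i hi; rw [h i hi]; exact hh i hi

lemma Surv_last {Vtx : Type*} (Γ : SimpleGraph Vtx) (W : Finset Vtx) {V : Finset Vtx}
    {r : ℕ} (R : Fin r → {x // x ∈ V}) :
    (W.filter fun w => ∀ i, ¬ Γ.Adj (R i).1 w) = Surv Γ W R r := by
  apply Finset.filter_congr
  intro w _
  exact ⟨fun h i _ => h i, fun h i => h i i.isLt⟩

theorem stmt_3 {Vtx : Type*} [Fintype Vtx] (Γ : SimpleGraph Vtx) (c : ℝ) (t r : ℕ)
    (hc : 0 < c) (hc' : c ≤ 1/2) (hr : 0 < r) (hsparse : Sparse Γ c t)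
    (V W : Finset Vtx) (hW : (c⁻¹ : ℝ) ^ r * t ≤ W.card) :
    ((Finset.univ.filter fun R : Fin r → {x // x ∈ V} =>
        ((W.filter fun w => ∀ i, ¬ Γ.Adj (R i).1 w).card : ℝ) < c ^ r * W.card).card : ℝ)
      / (V.card : ℝ) ^ r ≤ r * t / V.card := by
  by_cases hV : V.card = 0
  · have hVe : V = ∅ := Finset.card_eq_zero.mp hV
    have hemp : IsEmpty {x // x ∈ V} := by
      subst hVe
      exact ⟨fun x => Finset.notMem_empty x.1 x.2⟩
    have hT : (Finset.univ : Finset (Fin r → {x // x ∈ V})) = ∅ := by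
      rw [Finset.univ_eq_empty_iff]
      exact ⟨fun R => (hemp.false (R ⟨0, hr⟩))⟩
    simp [hT, hV]
  · have hVpos : (0 : ℝ) < V.card := by
      exact_mod_cast Nat.pos_of_ne_zero hV
    have hc1 : c ≤ 1 := by linarith
    have htW : (t : ℝ) ≤ c ^ r * W.card := by
      have h2 := mul_le_mul_of_nonneg_left hW (pow_nonneg hc.le r)
      calc (t : ℝ) = c ^ r * (c⁻¹ ^ r * t) := by
            rw [← mul_assoc, ← mul_pow, mul_inv_cancel₀ hc.ne', one_pow, one_mul]
        _ ≤ _ := h2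
    set Bad : Fin r → Finset (Fin r → {x // x ∈ V}) := fun i => Finset.univ.filter fun R =>
      t ≤ (Surv Γ W R (i : ℕ)).card ∧
        ((Surv Γ W R ((i : ℕ) + 1)).card : ℝ) < c * (Surv Γ W R (i : ℕ)).card with hBad
    -- Step A: failure event is covered by the bad events
    have hsub : (Finset.univ.filter fun R : Fin r → {x // x ∈ V} =>
        ((W.filter fun w => ∀ i, ¬ Γ.Adj (R i).1 w).card : ℝ) < c ^ r * W.card)
        ⊆ Finset.univ.biUnion Bad := by
      intro R hR
      rw [Finset.mem_filter] at hR
      by_contra hmem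
      simp only [Finset.mem_biUnion, Finset.mem_univ, true_and, not_exists] at hmem
      have key : ∀ k, k ≤ r → c ^ k * W.card ≤ ((Surv Γ W R k).card : ℝ) := by
        intro k
        induction k with
        | zero => intro _; rw [Surv_zero]; simp
        | succ k ih =>
          intro hk1
          have hkr : k < r := hk1
          have ihk := ih hkr.le
          have ht : (t : ℝ) ≤ ((Surv Γ W R k).card : ℝ) := by
            calc (t : ℝ) ≤ c ^ r * W.card := htW
              _ ≤ c ^ k * W.card :=
                  mul_le_mul_of_nonneg_right (pow_le_pow_of_le_one hc.le hc1 hkr.le)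
                    (Nat.cast_nonneg _)
              _ ≤ _ := ihk
          have htn : t ≤ (Surv Γ W R k).card := by exact_mod_cast ht
          have hnb := hmem ⟨k, hkr⟩
          simp only [hBad, Finset.mem_filter, Finset.mem_univ, true_and, not_and, not_lt] at hnb
          have hstep : c * ((Surv Γ W R k).card : ℝ) ≤ ((Surv Γ W R (k + 1)).card : ℝ) :=
            hnb htn
          calc c ^ (k + 1) * W.card = c * (c ^ k * W.card) := by ring
            _ ≤ c * ((Surv Γ W R k).card : ℝ) := mul_le_mul_of_nonneg_left ihk hc.le
            _ ≤ _ := hstep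
      have hfin := key r le_rfl
      rw [Surv_last] at hR
      linarith [hR.2]
    -- Step B: each bad event is small
    have hM : ∀ i : Fin r, (Bad i).card ≤ t * V.card ^ (r - 1) := by
      intro i
      have hfib := Finset.card_eq_sum_card_fiberwise
        (f := fun R : Fin r → {x // x ∈ V} => fun j : {j : Fin r // j ≠ i} => R j)
        (s := Bad i)
        (t := (Finset.univ : Finset ({j : Fin r // j ≠ i} → {x // x ∈ V})))
        (fun R _ => Finset.mem_univ _)
      rw [hfib]
      have hfle : ∀ g : {j : Fin r // j ≠ i} → {x // x ∈ V},
          ((Bad i).filter fun R => (fun j : {j : Fin r // j ≠ i} => R j) = g).card ≤ t := by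
        intro g
        rcases Finset.eq_empty_or_nonempty
          ((Bad i).filter fun R => (fun j : {j : Fin r // j ≠ i} => R j) = g) with he | hne
        · rw [he]; simp
        · obtain ⟨R0, hR0⟩ := hne
          rw [Finset.mem_filter] at hR0
          obtain ⟨hR0B, hR0g⟩ := hR0
          rw [hBad, Finset.mem_filter] at hR0B
          obtain ⟨-, htS, -⟩ := hR0B
          set S := Surv Γ W R0 (i : ℕ) with hSdef
          have hSame : ∀ R : Fin r → {x // x ∈ V},
              (fun j : {j : Fin r // j ≠ i} => R j) = g → Surv Γ W R (i : ℕ) = S := by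
            intro R hRg
            apply Surv_congr
            intro j hj
            have hji : j ≠ i := by
              intro hji'
              rw [hji'] at hj
              exact lt_irrefl _ hj
            calc R j = g ⟨j, hji⟩ := congrFun hRg ⟨j, hji⟩
              _ = R0 j := (congrFun hR0g ⟨j, hji⟩).symm
          calc ((Bad i).filter fun R => (fun j : {j : Fin r // j ≠ i} => R j) = g).card
              ≤ (Finset.univ.filter fun v : Vtx =>
                  (1 - c) * S.card < ((S.filter fun w => Γ.Adj v w).card : ℝ)).card := by
                apply Finset.card_le_card_of_injOn (fun R => (R i).1)
                · intro R hR
                  rw [Finset.mem_coe, Finset.mem_filter] at hR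
                  obtain ⟨hRB, hRg⟩ := hR
                  rw [hBad, Finset.mem_filter] at hRB
                  obtain ⟨-, -, hlt⟩ := hRB
                  have hSeq : Surv Γ W R (i : ℕ) = S := hSame R hRg
                  have hsucc := Surv_succ Γ W R (i : ℕ) i.isLt
                  have hieta : (⟨(i : ℕ), i.isLt⟩ : Fin r) = i := rfl
                  rw [hieta] at hsucc
                  rw [hsucc, hSeq] at hlt
                  have hsplit := Finset.card_filter_add_card_filter_not
                    (s := S) (p := fun w => Γ.Adj (R i).1 w)
                  rw [Finset.mem_coe, Finset.mem_filter]
                  refine ⟨Finset.mem_univ _, ?_⟩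
                  have : ((S.filter fun w => Γ.Adj (R i).1 w).card : ℝ)
                      + ((S.filter fun w => ¬ Γ.Adj (R i).1 w).card : ℝ) = S.card := by
                    exact_mod_cast congrArg (Nat.cast : ℕ → ℝ) hsplit
                  nlinarith [this, hlt]
                · intro R hR R' hR' hRR
                  rw [Finset.mem_coe, Finset.mem_filter] at hR hR'
                  funext j
                  by_cases hji : j = i
                  · subst hji
                    exact Subtype.ext hRR
                  · calc R j = g ⟨j, hji⟩ := congrFun hR.2 ⟨j, hji⟩
                      _ = R' j := (congrFun hR'.2 ⟨j, hji⟩).symm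
            _ ≤ t := badset_card_le hsparse S htS
      calc ∑ g ∈ (Finset.univ : Finset ({j : Fin r // j ≠ i} → {x // x ∈ V})),
            ((Bad i).filter fun R => (fun j : {j : Fin r // j ≠ i} => R j) = g).card
          ≤ ∑ _g ∈ (Finset.univ : Finset ({j : Fin r // j ≠ i} → {x // x ∈ V})), t :=
            Finset.sum_le_sum fun g _ => hfle g
        _ = Fintype.card ({j : Fin r // j ≠ i} → {x // x ∈ V}) * t := by
            rw [Finset.sum_const, smul_eq_mul, Finset.card_univ]
        _ = t * V.card ^ (r - 1) := by
            rw [Fintype.card_fun, Fintype.card_coe]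
            have : Fintype.card {j : Fin r // j ≠ i} = r - 1 := by
              rw [Fintype.card_subtype_compl, Fintype.card_subtype_eq, Fintype.card_fin]
            rw [this, mul_comm]
    -- Step C: combine
    have hcard : ((Finset.univ.filter fun R : Fin r → {x // x ∈ V} =>
        ((W.filter fun w => ∀ i, ¬ Γ.Adj (R i).1 w).card : ℝ) < c ^ r * W.card).card : ℝ)
        ≤ (r : ℝ) * t * V.card ^ (r - 1) := by
      have h1 : (Finset.univ.filter fun R : Fin r → {x // x ∈ V} =>
          ((W.filter fun w => ∀ i, ¬ Γ.Adj (R i).1 w).card : ℝ) < c ^ r * W.card).card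
          ≤ ∑ i : Fin r, (Bad i).card :=
        le_trans (Finset.card_le_card hsub) (Finset.card_biUnion_le)
      have h2 : ∑ i : Fin r, (Bad i).card ≤ r * (t * V.card ^ (r - 1)) := by
        calc ∑ i : Fin r, (Bad i).card ≤ ∑ _i : Fin r, t * V.card ^ (r - 1) :=
              Finset.sum_le_sum fun i _ => hM i
          _ = r * (t * V.card ^ (r - 1)) := by
              rw [Finset.sum_const, smul_eq_mul, Finset.card_univ, Fintype.card_fin]
      have := le_trans h1 h2
      calc ((Finset.univ.filter fun R : Fin r → {x // x ∈ V} =>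
          ((W.filter fun w => ∀ i, ¬ Γ.Adj (R i).1 w).card : ℝ) < c ^ r * W.card).card : ℝ)
          ≤ ((r * (t * V.card ^ (r - 1)) : ℕ) : ℝ) := by exact_mod_cast this
        _ = (r : ℝ) * t * V.card ^ (r - 1) := by push_cast; ring
    rw [div_le_div_iff₀ (pow_pos hVpos r) hVpos]
    calc ((Finset.univ.filter fun R : Fin r → {x // x ∈ V} =>
        ((W.filter fun w => ∀ i, ¬ Γ.Adj (R i).1 w).card : ℝ) < c ^ r * W.card).card : ℝ)
        * V.card ≤ ((r : ℝ) * t * V.card ^ (r - 1)) * V.card :=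
          mul_le_mul_of_nonneg_right hcard hVpos.le
      _ = (r : ℝ) * t * V.card ^ r := by
          rw [mul_assoc, ← pow_succ, Nat.sub_add_cancel hr]
      _ = (r : ℝ) * t * (V.card : ℝ) ^ r := rfl
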